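/- Let φ be a 3-CNF formula over variables Fin p, and form the training sample consisting of the big sentence together with, for each variable i : Fin p, the negation sentence [h_S, h_{X_{(i,false)}}, h_{Z_i}, h_{X_{(i,true)}}] where forget h_{Z_i} = Finsupp.single z_{(i,false)} 1 + Finsupp.single z_{(i,true)} 1. Then this sample has a solution (all lifts functional, with the prescribed images under forget, the same h_S and h_{X_L} used in every sentence in which the corresponding word occurs, and every sentence grammatical for s) if and only if φ is satisfiable, i.e. there exists a : Fin p → Bool such that every clause of φ contains a literal (i, b) with a i = b. (Mathematical core of the theorem that grammar induction from a self-dual compact closed category to a compact closed category is NP-complete.) -/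

import Mathlib

/-- The positive part of a signed multiset: `posPart μ a = μ (a, false)`. -/
noncomputable def posPart {α : Type*} (μ : α × Bool →₀ ℕ) : α →₀ ℕ :=
  Finsupp.comapDomain (fun a => (a, false)) μ (fun _ _ _ _ h => congrArg Prod.fst h)

/-- The negative part of a signed multiset: `negPart μ a = μ (a, true)`. -/
noncomputable def negPart {α : Type*} (μ : α × Bool →₀ ℕ) : α →₀ ℕ :=
  Finsupp.comapDomain (fun a => (a, true)) μ (fun _ _ _ _ h => congrArg Prod.fst h)

/-- Forgetting the signs: `forget μ a = μ (a, false) + μ (a, true)`. -/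
noncomputable def forget {α : Type*} (μ : α × Bool →₀ ℕ) : α →₀ ℕ :=
  posPart μ + negPart μ

/-- The signed sum: `sgn μ a = (μ (a, false) : ℤ) − (μ (a, true) : ℤ)`. -/
noncomputable def sgn {α : Type*} (μ : α × Bool →₀ ℕ) : α →₀ ℤ :=
  (posPart μ).mapRange (Nat.cast : ℕ → ℤ) Nat.cast_zero
    - (negPart μ).mapRange (Nat.cast : ℕ → ℤ) Nat.cast_zero

/-- A signed multiset is functional if it is a single generator, or it has at least one
occurrence with exponent `+1` and at least one with exponent `−1`. -/
def Functional {α : Type*} (μ : α × Bool →₀ ℕ) : Prop :=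
  (∃ a : α, μ = Finsupp.single (a, false) 1) ∨
    (∃ a b : α, 0 < μ (a, false) ∧ 0 < μ (b, true))

/-- A list of signed multisets is grammatical for `s` if the signed sums of its entries
add up to `Finsupp.single s 1`. -/
noncomputable def Grammatical {α : Type*} (s : α) (l : List (α × Bool →₀ ℕ)) : Prop :=
  (l.map sgn).sum = Finsupp.single s 1

/-- The list of all literal occurrences of a 3-CNF formula. -/
def lits {p : ℕ} (φ : List ((Fin p × Bool) × (Fin p × Bool) × (Fin p × Bool))) :
    List (Fin p × Bool) :=
  φ.flatMap fun c => [c.1, c.2.1, c.2.2]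

/-- The semantic type `t c = d + z_{L₁} + z_{L₂} + z_{L₃}` of a clause `c`. -/
noncomputable def clauseType {α : Type*} {p : ℕ} (d : α) (z : Fin p × Bool → α)
    (c : (Fin p × Bool) × (Fin p × Bool) × (Fin p × Bool)) : α →₀ ℕ :=
  Finsupp.single d 1 + Finsupp.single (z c.1) 1 + Finsupp.single (z c.2.1) 1 +
    Finsupp.single (z c.2.2) 1

/-- The semantic type `v L = z_L + 2 • y_L` of a literal `L`. -/
noncomputable def litType {α : Type*} {p : ℕ} (z y : Fin p × Bool → α) (L : Fin p × Bool) :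
    α →₀ ℕ :=
  Finsupp.single (z L) 1 + 2 • Finsupp.single (y L) 1

/-- The big sentence: the word `S`, then for each clause `c_j` the words `C_j` and `D_j`,
then `n_L` copies of the word `X_L` for each literal `L` (one copy per occurrence of `L`
in the formula), all replaced by the chosen lifts. -/
noncomputable def bigSentence {α : Type*} {p : ℕ}
    (φ : List ((Fin p × Bool) × (Fin p × Bool) × (Fin p × Bool)))
    (hS : α × Bool →₀ ℕ) (hC hD : Fin φ.length → (α × Bool →₀ ℕ))
    (hX : Fin p × Bool → (α × Bool →₀ ℕ)) : List (α × Bool →₀ ℕ) :=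
  hS :: (((List.finRange φ.length).flatMap fun j => [hC j, hD j]) ++ (lits φ).map hX)

/-- A solution of the training sample consisting of the big sentence together with, for
each variable `i`, the negation sentence `[h_S, h_{X_{(i,false)}}, h_{Z_i}, h_{X_{(i,true)}}]`:
all lifts are functional, have the prescribed images under `forget`, the same `h_S` and
`h_{X_L}` are used in every sentence, and every sentence is grammatical for `s`. -/
noncomputable def SampleSolution {α : Type*} {p : ℕ} (s d : α) (z y : Fin p × Bool → α)
    (φ : List ((Fin p × Bool) × (Fin p × Bool) × (Fin p × Bool)))
    (hS : α × Bool →₀ ℕ) (hC hD : Fin φ.length → (α × Bool →₀ ℕ))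
    (hX : Fin p × Bool → (α × Bool →₀ ℕ)) (hZ : Fin p → (α × Bool →₀ ℕ)) : Prop :=
  Functional hS ∧ forget hS = Finsupp.single s 1 ∧
  (∀ j : Fin φ.length, Functional (hC j) ∧ forget (hC j) = clauseType d z (φ.get j)) ∧
  (∀ j : Fin φ.length, Functional (hD j) ∧ forget (hD j) = Finsupp.single d 1) ∧
  (∀ L : Fin p × Bool, Functional (hX L) ∧ forget (hX L) = litType z y L) ∧
  (∀ i : Fin p, Functional (hZ i) ∧
    forget (hZ i) = Finsupp.single (z (i, false)) 1 + Finsupp.single (z (i, true)) 1) ∧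
  Grammatical s (bigSentence φ hS hC hD hX) ∧
  (∀ i : Fin p, Grammatical s [hS, hX (i, false), hZ i, hX (i, true)])


open scoped Classical

lemma forget_apply {α : Type*} (μ : α × Bool →₀ ℕ) (a : α) :
    forget μ a = μ (a, false) + μ (a, true) := by
  simp [forget, _root_.posPart, _root_.negPart, Finsupp.comapDomain_apply]
  rfl

lemma sgn_apply {α : Type*} (μ : α × Bool →₀ ℕ) (a : α) :
    sgn μ a = (μ (a, false) : ℤ) - (μ (a, true) : ℤ) := by
  simp [sgn, _root_.posPart, _root_.negPart, Finsupp.comapDomain_apply, Finsupp.mapRange_apply]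
  rfl

lemma pair_single_apply {α : Type*} (w : α) (b : Bool) (n : ℕ) (a : α) (c : Bool) :
    (Finsupp.single (w, b) n) (a, c) = if w = a ∧ b = c then n else 0 := by
  rw [Finsupp.single_apply]
  congr 1
  simp [Prod.ext_iff]

lemma forget_single {α : Type*} (w : α) (b : Bool) (n : ℕ) :
    forget (Finsupp.single (w, b) n) = Finsupp.single w n := by
  ext a
  rw [forget_apply, pair_single_apply, pair_single_apply, Finsupp.single_apply]
  cases b <;> simp

lemma forget_add {α : Type*} (μ ν : α × Bool →₀ ℕ) :
    forget (μ + ν) = forget μ + forget ν := by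
  ext a; simp [forget_apply]; ring

lemma sgn_single_false {α : Type*} (w : α) (n : ℕ) :
    sgn (Finsupp.single (w, false) n) = Finsupp.single w (n : ℤ) := by
  ext a
  rw [sgn_apply, pair_single_apply, pair_single_apply, Finsupp.single_apply]
  simp

lemma sgn_single_true {α : Type*} (w : α) (n : ℕ) :
    sgn (Finsupp.single (w, true) n) = -Finsupp.single w (n : ℤ) := by
  ext a
  rw [Finsupp.neg_apply, sgn_apply, pair_single_apply, pair_single_apply, Finsupp.single_apply]
  simp

lemma sgn_add {α : Type*} (μ ν : α × Bool →₀ ℕ) :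
    sgn (μ + ν) = sgn μ + sgn ν := by
  ext a; simp [sgn_apply]; ring

lemma functional_forget_single {α : Type*} {μ : α × Bool →₀ ℕ} {w : α}
    (hf : Functional μ) (h : forget μ = Finsupp.single w 1) :
    μ = Finsupp.single (w, false) 1 := by
  rcases hf with ⟨a, rfl⟩ | ⟨a, b, ha, hb⟩
  · rw [forget_single] at h
    rw [(Finsupp.single_left_inj one_ne_zero).mp h]
  · exfalso
    have h1 := DFunLike.congr_fun h a
    have h2 := DFunLike.congr_fun h b
    rw [forget_apply, Finsupp.single_apply] at h1 h2
    have haw : w = a := by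
      by_contra hne
      rw [if_neg hne] at h1
      omega
    have hbw : w = b := by
      by_contra hne
      rw [if_neg hne] at h2
      omega
    subst haw
    subst hbw
    rw [if_pos rfl] at h1
    omega

lemma sgn_eq_zero_of_forget {α : Type*} {μ : α × Bool →₀ ℕ} {a : α}
    (h : forget μ a = 0) : sgn μ a = 0 := by
  rw [forget_apply] at h
  rw [sgn_apply]
  omega

lemma sgn_cases_of_forget_one {α : Type*} {μ : α × Bool →₀ ℕ} {a : α}
    (h : forget μ a = 1) : sgn μ a = 1 ∨ sgn μ a = -1 := by
  rw [forget_apply] at h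
  rw [sgn_apply]
  omega

lemma neg_forget_le_sgn {α : Type*} (μ : α × Bool →₀ ℕ) (a : α) :
    -(forget μ a : ℤ) ≤ sgn μ a := by
  rw [forget_apply, sgn_apply]
  push_cast
  omega

lemma list_sum_map_get {β M : Type*} [AddCommMonoid M] (l : List β) (f : β → M) :
    (l.map f).sum = ∑ j : Fin l.length, f (l.get j) := by
  conv_lhs => rw [← List.ofFn_get l]
  rw [List.map_ofFn, List.sum_ofFn]
  rfl

lemma sum_map_flatMap {β γ M : Type*} [AddCommMonoid M] (l : List β) (g : β → List γ)
    (f : γ → M) :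
    ((l.flatMap g).map f).sum = (l.map fun b => ((g b).map f).sum).sum := by
  induction l with
  | nil => simp
  | cons hd tl ih => simp [List.flatMap_cons, ih]

lemma sum_map_finRange {M : Type*} [AddCommMonoid M] (n : ℕ) (f : Fin n → M) :
    ((List.finRange n).map f).sum = ∑ j : Fin n, f j := by
  rw [← List.ofFn_id n, List.map_ofFn, List.sum_ofFn]
  rfl

lemma bigSentence_sum {α : Type*} {p : ℕ}
    (φ : List ((Fin p × Bool) × (Fin p × Bool) × (Fin p × Bool)))
    (hS : α × Bool →₀ ℕ) (hC hD : Fin φ.length → (α × Bool →₀ ℕ))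
    (hX : Fin p × Bool → (α × Bool →₀ ℕ)) :
    ((bigSentence φ hS hC hD hX).map sgn).sum
      = sgn hS + ∑ j : Fin φ.length,
          (sgn (hC j) + sgn (hD j)
            + (sgn (hX (φ.get j).1) + sgn (hX (φ.get j).2.1) + sgn (hX (φ.get j).2.2))) := by
  unfold bigSentence lits
  rw [List.map_cons, List.sum_cons, List.map_append, List.sum_append, List.map_map,
    sum_map_flatMap, sum_map_flatMap]
  simp only [List.map_cons, List.map_nil, List.sum_cons, List.sum_nil, add_zero,
    Function.comp_apply]
  rw [sum_map_finRange, list_sum_map_get, ← Finset.sum_add_distrib]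
  congr 1
  apply Finset.sum_congr rfl
  intro j _
  abel

lemma sgn_two {α : Type*} {μ : α × Bool →₀ ℕ} {u v : α}
    (hf : Functional μ) (h : forget μ = Finsupp.single u 1 + Finsupp.single v 1)
    (huv : u ≠ v) :
    (sgn μ u = 1 ∧ sgn μ v = -1) ∨ (sgn μ u = -1 ∧ sgn μ v = 1) := by
  have Hu := DFunLike.congr_fun h u
  have Hv := DFunLike.congr_fun h v
  rw [forget_apply, Finsupp.add_apply, Finsupp.single_apply, Finsupp.single_apply] at Hu Hv
  rw [if_pos rfl, if_neg (Ne.symm huv)] at Hu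
  rw [if_pos rfl, if_neg huv] at Hv
  rcases hf with ⟨a, rfl⟩ | ⟨a, b, ha, hb⟩
  · exfalso
    simp only [pair_single_apply] at Hu Hv
    split_ifs at Hu Hv <;> simp_all
  · have Ha := DFunLike.congr_fun h a
    have Hb := DFunLike.congr_fun h b
    rw [forget_apply, Finsupp.add_apply, Finsupp.single_apply, Finsupp.single_apply] at Ha Hb
    rw [sgn_apply, sgn_apply]
    by_cases hua : u = a <;> by_cases hva : v = a <;> by_cases hub : u = b <;>
      by_cases hvb : v = b <;>
      simp only [if_pos, if_neg, hua, hva, hub, hvb] at Ha Hb <;>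
      subst_vars <;> simp_all <;> omega

lemma clauseType_apply {α : Type*} {p : ℕ} (d : α) (z : Fin p × Bool → α)
    (c : (Fin p × Bool) × (Fin p × Bool) × (Fin p × Bool)) (g : α) :
    clauseType d z c g = (if d = g then 1 else 0) + (if z c.1 = g then 1 else 0)
      + (if z c.2.1 = g then 1 else 0) + (if z c.2.2 = g then 1 else 0) := by
  simp [clauseType, Finsupp.single_apply]

lemma litType_apply {α : Type*} {p : ℕ} (z y : Fin p × Bool → α) (L : Fin p × Bool) (g : α) :
    litType z y L g = (if z L = g then 1 else 0) + 2 * (if y L = g then 1 else 0) := by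
  simp only [litType, Finsupp.add_apply, Finsupp.smul_apply, Finsupp.single_apply,
    smul_eq_mul]

/-- Mathematical core of NP-completeness of grammar induction from a self-dual compact
closed category to a compact closed category: the training sample built from a 3-CNF
formula `φ` has a solution iff `φ` is satisfiable. -/
theorem sample_solvable_iff_satisfiable {α : Type*} {p : ℕ} (s d : α)
    (z y : Fin p × Bool → α)
    (hz : Function.Injective z) (hy : Function.Injective y)
    (hsd : s ≠ d) (hsz : ∀ L, s ≠ z L) (hsy : ∀ L, s ≠ y L)
    (hdz : ∀ L, d ≠ z L) (hdy : ∀ L, d ≠ y L) (hzy : ∀ L L', z L ≠ y L')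
    (φ : List ((Fin p × Bool) × (Fin p × Bool) × (Fin p × Bool))) :
    (∃ (hS : α × Bool →₀ ℕ) (hC hD : Fin φ.length → (α × Bool →₀ ℕ))
        (hX : Fin p × Bool → (α × Bool →₀ ℕ)) (hZ : Fin p → (α × Bool →₀ ℕ)),
      SampleSolution s d z y φ hS hC hD hX hZ) ↔
    (∃ a : Fin p → Bool, ∀ c ∈ φ,
      a c.1.1 = c.1.2 ∨ a c.2.1.1 = c.2.1.2 ∨ a c.2.2.1 = c.2.2.2) := by
  constructor
  · rintro ⟨hS, hC, hD, hX, hZ, FS, GS, HC, HD, HX, HZ, Gbig, Gneg⟩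
    -- hS and hD are forced
    have hSs : sgn hS = Finsupp.single s 1 := by
      rw [functional_forget_single FS GS, sgn_single_false, Nat.cast_one]
    have hDs : ∀ j, sgn (hD j) = Finsupp.single d 1 := fun j => by
      rw [functional_forget_single (HD j).1 (HD j).2, sgn_single_false, Nat.cast_one]
    -- pointwise values of forget (hX L)
    have forgX : ∀ L g, forget (hX L) g
        = (if z L = g then 1 else 0) + 2 * (if y L = g then 1 else 0) := fun L g => by
      rw [(HX L).2, litType_apply]
    have forgXz : ∀ L, forget (hX L) (z L) = 1 := fun L => by
      rw [forgX L (z L), if_pos rfl, if_neg (Ne.symm (hzy L L))]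
    set ε : Fin p × Bool → ℤ := fun L => sgn (hX L) (z L) with hεdef
    have epsX : ∀ L, ε L = 1 ∨ ε L = -1 := fun L => sgn_cases_of_forget_one (forgXz L)
    have sgnXz : ∀ (L L' : Fin p × Bool), L' ≠ L → sgn (hX L') (z L) = 0 := by
      intro L L' hne
      apply sgn_eq_zero_of_forget
      rw [forgX L' (z L), if_neg (fun hc => hne (hz hc)), if_neg (Ne.symm (hzy L L'))]
    have sgnXd : ∀ L, sgn (hX L) d = 0 := fun L => by
      apply sgn_eq_zero_of_forget
      rw [forgX L d, if_neg (Ne.symm (hdz L)), if_neg (Ne.symm (hdy L))]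
    -- structure of hZ
    have hZsgn : ∀ i : Fin p,
        (sgn (hZ i) (z (i, false)) = 1 ∧ sgn (hZ i) (z (i, true)) = -1)
        ∨ (sgn (hZ i) (z (i, false)) = -1 ∧ sgn (hZ i) (z (i, true)) = 1) := fun i =>
      sgn_two (HZ i).1 (HZ i).2 (fun hc => by simpa using hz hc)
    -- negation sentences
    have negEq : ∀ i : Fin p,
        sgn (hX (i, false)) + (sgn (hZ i) + sgn (hX (i, true))) = 0 := by
      intro i
      have h0 := Gneg i
      unfold Grammatical at h0
      simp only [List.map_cons, List.map_nil, List.sum_cons, List.sum_nil, add_zero] at h0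
      rw [hSs, add_eq_left] at h0
      exact h0
    have epsZ : ∀ (i : Fin p) (b : Bool), ε (i, b) + sgn (hZ i) (z (i, b)) = 0 := by
      intro i b
      have h1 := DFunLike.congr_fun (negEq i) (z (i, b))
      rw [Finsupp.add_apply, Finsupp.add_apply, Finsupp.zero_apply] at h1
      cases b
      · rw [sgnXz (i, false) (i, true) (by simp)] at h1
        show sgn (hX (i, false)) (z (i, false)) + sgn (hZ i) (z (i, false)) = 0
        omega
      · rw [sgnXz (i, true) (i, false) (by simp)] at h1
        show sgn (hX (i, true)) (z (i, true)) + sgn (hZ i) (z (i, true)) = 0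
        omega
    have epsOpp : ∀ i : Fin p, ε (i, false) = -ε (i, true) := by
      intro i
      have e1 := epsZ i false
      have e2 := epsZ i true
      rcases hZsgn i with ⟨h1, h2⟩ | ⟨h1, h2⟩ <;> omega
    -- the assignment
    refine ⟨fun i => decide (ε (i, true) = -1), ?_⟩
    have akey : ∀ (i : Fin p) (b : Bool), decide (ε (i, true) = -1) = b ↔ ε (i, b) = -1 := by
      intro i b
      have h1 := epsX (i, true)
      have h2 := epsOpp i
      cases b
      · simp only [decide_eq_false_iff_not]
        omega
      · simp only [decide_eq_true_eq]
    -- big sentence equation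
    have bigEq : ∑ j : Fin φ.length,
        (sgn (hC j) + sgn (hD j)
          + (sgn (hX (φ.get j).1) + sgn (hX (φ.get j).2.1) + sgn (hX (φ.get j).2.2))) = 0 := by
      have h0 := Gbig
      unfold Grammatical at h0
      rw [bigSentence_sum, hSs, add_eq_left] at h0
      exact h0
    -- pointwise values of forget (hC j)
    have forgC : ∀ j g, forget (hC j) g
        = (if d = g then 1 else 0) + (if z (φ.get j).1 = g then 1 else 0)
          + (if z (φ.get j).2.1 = g then 1 else 0)
          + (if z (φ.get j).2.2 = g then 1 else 0) := fun j g => by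
      rw [(HC j).2, clauseType_apply]
    -- the d-copies in the hC j are negative
    have hCd : ∀ j, hC j (d, false) = 0 := by
      have hsum := congrArg (fun f : α →₀ ℤ => f d) bigEq
      simp only [Finsupp.finset_sum_apply, Finsupp.add_apply, Finsupp.zero_apply] at hsum
      have hterm : ∀ j : Fin φ.length,
          sgn (hC j) d + sgn (hD j) d
            + (sgn (hX (φ.get j).1) d + sgn (hX (φ.get j).2.1) d
              + sgn (hX (φ.get j).2.2) d)
          = sgn (hC j) d + 1 := fun j => by
        rw [hDs j, sgnXd, sgnXd, sgnXd, Finsupp.single_eq_same]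
        ring
      rw [Finset.sum_congr rfl (fun j _ => hterm j)] at hsum
      have hforgCd : ∀ j, forget (hC j) d = 1 := fun j => by
        rw [forgC j d, if_pos rfl, if_neg (Ne.symm (hdz _)), if_neg (Ne.symm (hdz _)),
          if_neg (Ne.symm (hdz _))]
      have hnn : ∀ j ∈ Finset.univ (α := Fin φ.length), 0 ≤ sgn (hC j) d + 1 := fun j _ => by
        have := neg_forget_le_sgn (hC j) d
        rw [hforgCd j] at this
        omega
      have hall := (Finset.sum_eq_zero_iff_of_nonneg hnn).mp hsum
      intro j
      have h1 := hall j (Finset.mem_univ j)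
      have h2 := hforgCd j
      rw [forget_apply] at h2
      rw [sgn_apply] at h1
      omega
    -- if ε L = 1 then the L-copies in the hC j are all negative
    have hCz : ∀ L : Fin p × Bool, ε L = 1 → ∀ j, hC j (z L, false) = 0 := by
      intro L hL
      have hsum := congrArg (fun f : α →₀ ℤ => f (z L)) bigEq
      simp only [Finsupp.finset_sum_apply, Finsupp.add_apply, Finsupp.zero_apply] at hsum
      have hXval : ∀ L' : Fin p × Bool,
          sgn (hX L') (z L) = if L' = L then 1 else 0 := fun L' => by
        by_cases hc : L' = L
        · rw [if_pos hc, hc]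
          exact hL
        · rw [if_neg hc, sgnXz L L' hc]
      have hterm : ∀ j : Fin φ.length,
          sgn (hC j) (z L) + sgn (hD j) (z L)
            + (sgn (hX (φ.get j).1) (z L) + sgn (hX (φ.get j).2.1) (z L)
              + sgn (hX (φ.get j).2.2) (z L))
          = sgn (hC j) (z L)
            + ((if (φ.get j).1 = L then 1 else 0) + (if (φ.get j).2.1 = L then 1 else 0)
              + (if (φ.get j).2.2 = L then 1 else 0)) := fun j => by
        rw [hDs j, hXval, hXval, hXval, Finsupp.single_apply, if_neg (hdz L)]
        ring
      rw [Finset.sum_congr rfl (fun j _ => hterm j)] at hsum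
      have hforgCz : ∀ j, (forget (hC j) (z L) : ℤ)
          = (if (φ.get j).1 = L then 1 else 0) + (if (φ.get j).2.1 = L then 1 else 0)
            + (if (φ.get j).2.2 = L then 1 else 0) := fun j => by
        rw [forgC j (z L), if_neg (hdz L)]
        have e1 : (if z (φ.get j).1 = z L then (1 : ℕ) else 0)
            = if (φ.get j).1 = L then 1 else 0 := by
          by_cases hc : (φ.get j).1 = L
          · rw [if_pos hc, if_pos (congrArg z hc)]
          · rw [if_neg hc, if_neg (fun hcc => hc (hz hcc))]
        have e2 : (if z (φ.get j).2.1 = z L then (1 : ℕ) else 0)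
            = if (φ.get j).2.1 = L then 1 else 0 := by
          by_cases hc : (φ.get j).2.1 = L
          · rw [if_pos hc, if_pos (congrArg z hc)]
          · rw [if_neg hc, if_neg (fun hcc => hc (hz hcc))]
        have e3 : (if z (φ.get j).2.2 = z L then (1 : ℕ) else 0)
            = if (φ.get j).2.2 = L then 1 else 0 := by
          by_cases hc : (φ.get j).2.2 = L
          · rw [if_pos hc, if_pos (congrArg z hc)]
          · rw [if_neg hc, if_neg (fun hcc => hc (hz hcc))]
        rw [e1, e2, e3]
        push_cast
        split_ifs <;> norm_num
      have hnn : ∀ j ∈ Finset.univ (α := Fin φ.length),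
          0 ≤ sgn (hC j) (z L)
            + ((if (φ.get j).1 = L then 1 else 0) + (if (φ.get j).2.1 = L then 1 else 0)
              + (if (φ.get j).2.2 = L then 1 else 0)) := fun j _ => by
        have h1 := neg_forget_le_sgn (hC j) (z L)
        rw [hforgCz j] at h1
        omega
      have hall := (Finset.sum_eq_zero_iff_of_nonneg hnn).mp hsum
      intro j
      have h1 := hall j (Finset.mem_univ j)
      have h2 := hforgCz j
      rw [forget_apply] at h2
      rw [sgn_apply] at h1
      push_cast at h2
      omega
    -- now verify each clause is satisfied
    intro c hc
    obtain ⟨j, hj⟩ := List.mem_iff_get.mp hc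
    -- a generator with a positive occurrence in hC j
    rcases (HC j).1 with ⟨w, hCj⟩ | ⟨w, w', hpw, _⟩
    · exfalso
      have h1 : forget (hC j) d = 1 := by
        rw [forgC j d, if_pos rfl, if_neg (Ne.symm (hdz _)), if_neg (Ne.symm (hdz _)),
          if_neg (Ne.symm (hdz _))]
      have h2 : 1 ≤ forget (hC j) (z (φ.get j).1) := by
        rw [forgC j (z (φ.get j).1), if_pos rfl]
        omega
      rw [hCj, forget_single, Finsupp.single_apply] at h1 h2
      have hwd : w = d := by by_contra hne; rw [if_neg hne] at h1; omega
      have hwz : w = z (φ.get j).1 := by by_contra hne; rw [if_neg hne] at h2; omega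
      exact hdz (φ.get j).1 (hwd ▸ hwz)
    · -- w must be one of the clause generators, and not d
      have hwd : w ≠ d := fun hne => by
        rw [hne] at hpw
        rw [hCd j] at hpw
        omega
      have hw1 : 0 < forget (hC j) w := by
        rw [forget_apply]
        omega
      rw [forgC j w] at hw1
      have hwz : z (φ.get j).1 = w ∨ z (φ.get j).2.1 = w ∨ z (φ.get j).2.2 = w := by
        rw [if_neg (fun hc => hwd hc.symm)] at hw1
        by_cases c1 : z (φ.get j).1 = w
        · exact Or.inl c1
        · by_cases c2 : z (φ.get j).2.1 = w
          · exact Or.inr (Or.inl c2)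
          · by_cases c3 : z (φ.get j).2.2 = w
            · exact Or.inr (Or.inr c3)
            · rw [if_neg c1, if_neg c2, if_neg c3] at hw1
              omega
      have key : ∀ L : Fin p × Bool, z L = w → ε L = -1 := by
        intro L hL
        rcases epsX L with h1 | h1
        · exfalso
          have := hCz L h1 j
          rw [hL] at this
          omega
        · exact h1
      rw [← hj]
      rcases hwz with hcase | hcase | hcase
      · exact Or.inl ((akey _ _).mpr (key _ hcase))
      · exact Or.inr (Or.inl ((akey _ _).mpr (key _ hcase)))
      · exact Or.inr (Or.inr ((akey _ _).mpr (key _ hcase)))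
  · rintro ⟨a, hsat⟩
    refine ⟨Finsupp.single (s, false) 1,
      fun j => Finsupp.single (d, true) 1
        + Finsupp.single (z (φ.get j).1, !(a (φ.get j).1.1 == (φ.get j).1.2)) 1
        + Finsupp.single (z (φ.get j).2.1, !(a (φ.get j).2.1.1 == (φ.get j).2.1.2)) 1
        + Finsupp.single (z (φ.get j).2.2, !(a (φ.get j).2.2.1 == (φ.get j).2.2.2)) 1,
      fun _ => Finsupp.single (d, false) 1,
      fun L => Finsupp.single (z L, a L.1 == L.2) 1
        + Finsupp.single (y L, false) 1 + Finsupp.single (y L, true) 1,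
      fun i => Finsupp.single (z (i, a i), false) 1 + Finsupp.single (z (i, !(a i)), true) 1,
      ?_, ?_, ?_, ?_, ?_, ?_, ?_, ?_⟩
    · exact Or.inl ⟨s, rfl⟩
    · exact forget_single s false 1
    · intro j
      constructor
      · have hdpos : 0 < ((Finsupp.single (d, true) 1
            + Finsupp.single (z (φ.get j).1, !(a (φ.get j).1.1 == (φ.get j).1.2)) 1
            + Finsupp.single (z (φ.get j).2.1, !(a (φ.get j).2.1.1 == (φ.get j).2.1.2)) 1
            + Finsupp.single (z (φ.get j).2.2, !(a (φ.get j).2.2.1 == (φ.get j).2.2.2)) 1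
            : α × Bool →₀ ℕ)) (d, true) := by
          have h : (Finsupp.single ((d : α), true) 1) (d, true) = 1 := Finsupp.single_eq_same
          simp only [Finsupp.add_apply]
          omega
        rcases hsat (φ.get j) (φ.get_mem _) with hk | hk | hk
        · refine Or.inr ⟨z (φ.get j).1, d, ?_, hdpos⟩
          have hb : (!(a (φ.get j).1.1 == (φ.get j).1.2)) = false := by rw [hk]; simp
          have h : (Finsupp.single (z (φ.get j).1, false) (1 : ℕ)) (z (φ.get j).1, false) = 1 :=
            Finsupp.single_eq_same
          simp only [Finsupp.add_apply, hb]
          omega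
        · refine Or.inr ⟨z (φ.get j).2.1, d, ?_, hdpos⟩
          have hb : (!(a (φ.get j).2.1.1 == (φ.get j).2.1.2)) = false := by rw [hk]; simp
          have h : (Finsupp.single (z (φ.get j).2.1, false) (1 : ℕ)) (z (φ.get j).2.1, false) = 1 :=
            Finsupp.single_eq_same
          simp only [Finsupp.add_apply, hb]
          omega
        · refine Or.inr ⟨z (φ.get j).2.2, d, ?_, hdpos⟩
          have hb : (!(a (φ.get j).2.2.1 == (φ.get j).2.2.2)) = false := by rw [hk]; simp
          have h : (Finsupp.single (z (φ.get j).2.2, false) (1 : ℕ)) (z (φ.get j).2.2, false) = 1 :=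
            Finsupp.single_eq_same
          simp only [Finsupp.add_apply, hb]
          omega
      · rw [forget_add, forget_add, forget_add, forget_single, forget_single, forget_single,
          forget_single]
        rfl
    · intro j
      exact ⟨Or.inl ⟨d, rfl⟩, forget_single d false 1⟩
    · intro L
      constructor
      · refine Or.inr ⟨y L, y L, ?_, ?_⟩
        · have h : (Finsupp.single ((y L : α), false) (1 : ℕ)) (y L, false) = 1 :=
            Finsupp.single_eq_same
          simp only [Finsupp.add_apply]
          omega
        · have h : (Finsupp.single ((y L : α), true) (1 : ℕ)) (y L, true) = 1 :=
            Finsupp.single_eq_same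
          simp only [Finsupp.add_apply]
          omega
      · rw [forget_add, forget_add, forget_single, forget_single, forget_single]
        rw [litType, two_nsmul, ← add_assoc]
    · intro i
      constructor
      · refine Or.inr ⟨z (i, a i), z (i, !(a i)), ?_, ?_⟩
        · have h : (Finsupp.single ((z (i, a i) : α), false) (1 : ℕ)) (z (i, a i), false) = 1 :=
            Finsupp.single_eq_same
          simp only [Finsupp.add_apply]
          omega
        · have h : (Finsupp.single ((z (i, !(a i)) : α), true) (1 : ℕ)) (z (i, !(a i)), true) = 1 :=
            Finsupp.single_eq_same
          simp only [Finsupp.add_apply]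
          omega
      · rw [forget_add, forget_single, forget_single]
        cases hai : a i <;> simp [add_comm]
    · unfold Grammatical
      rw [bigSentence_sum]
      have hz0 : ∀ j : Fin φ.length,
          (sgn ((fun j => Finsupp.single (d, true) 1
            + Finsupp.single (z (φ.get j).1, !(a (φ.get j).1.1 == (φ.get j).1.2)) 1
            + Finsupp.single (z (φ.get j).2.1, !(a (φ.get j).2.1.1 == (φ.get j).2.1.2)) 1
            + Finsupp.single (z (φ.get j).2.2, !(a (φ.get j).2.2.1 == (φ.get j).2.2.2)) 1) j)
          + sgn ((fun _ : Fin φ.length => Finsupp.single (d, false) 1) j)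
          + (sgn ((fun L => Finsupp.single (z L, a L.1 == L.2) 1
              + Finsupp.single (y L, false) 1 + Finsupp.single (y L, true) 1) (φ.get j).1)
            + sgn ((fun L => Finsupp.single (z L, a L.1 == L.2) 1
              + Finsupp.single (y L, false) 1 + Finsupp.single (y L, true) 1) (φ.get j).2.1)
            + sgn ((fun L => Finsupp.single (z L, a L.1 == L.2) 1
              + Finsupp.single (y L, false) 1 + Finsupp.single (y L, true) 1) (φ.get j).2.2)))
          = 0 := by
        intro j
        rcases hc : (φ.get j) with ⟨⟨i1, b1⟩, ⟨i2, b2⟩, ⟨i3, b3⟩⟩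
        simp only [hc, sgn_add]
        cases h1 : a i1 == b1 <;> cases h2 : a i2 == b2 <;> cases h3 : a i3 == b3 <;>
          simp only [h1, h2, h3, Bool.not_false, Bool.not_true, sgn_single_false,
            sgn_single_true, Nat.cast_one] <;> abel
      rw [Finset.sum_congr rfl (fun j _ => hz0 j), Finset.sum_const, smul_zero, add_zero,
        sgn_single_false, Nat.cast_one]
    · intro i
      unfold Grammatical
      simp only [List.map_cons, List.map_nil, List.sum_cons, List.sum_nil, add_zero, sgn_add]
      cases hai : a i <;>
        simp [hai, sgn_single_false, sgn_single_true]
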